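/- Well-definedness of Φ. Suppose q₀ ∈ L¹(0,1), and let σ_min = min_{x ∈ [0,1]} σ(x) > 0. Then for every k ∈ ℂ and every x ∈ (0,1), the integral Φ(k,x) = ∫₀¹ Ψ(k,x,y)·q₀(y)/√(σ(x)σ(y)) dy converges absolutely, and |Φ(k,x)| ≤ σ_min^{−1} · exp( ∫₀¹ |σ'(ξ)|/σ(ξ) dξ + |Im k| ∫₀¹ dξ/σ(ξ) ) · ‖q₀‖_{L¹(0,1)}. -/

import Mathlib

open MeasureTheory Filter

noncomputable section

/-- Nodes of the simplex: `y₀ = a`, `y_{n+1} = b`, interior nodes from `y`. -/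
def nodes (a b : ℝ) (n : ℕ) (y : Fin n → ℝ) (p : ℕ) : ℝ :=
  if h : 1 ≤ p ∧ p ≤ n then y ⟨p - 1, by omega⟩ else if p = 0 then a else b

/-- The ordered simplex `a ≤ y₁ ≤ ⋯ ≤ y_n ≤ b`. -/
def simplex (a b : ℝ) (n : ℕ) : Set (Fin n → ℝ) :=
  {y | Monotone y ∧ ∀ i, y i ∈ Set.Icc a b}

/-- The alternating phase `∑_{p=0}^{n} (−1)^p ∫_{y_p}^{y_{p+1}} dξ/σ(ξ)`. -/
def phase (σ : ℝ → ℝ) (a b : ℝ) (n : ℕ) (y : Fin n → ℝ) : ℝ :=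
  ∑ p ∈ Finset.range (n + 1),
    (-1 : ℝ) ^ p * ∫ ξ in (nodes a b n y p)..(nodes a b n y (p + 1)), 1 / σ ξ

/-- The integrand defining `S_n^{(a,b)}(k)`. -/
def Sintegrand (σ : ℝ → ℝ) (a b : ℝ) (n : ℕ) (k : ℂ) (y : Fin n → ℝ) : ℂ :=
  ((∏ p, deriv σ (y p) / σ (y p) : ℝ) : ℂ) * Complex.sin (k * ((phase σ a b n y : ℝ) : ℂ))

/-- `S_n^{(a,b)}(k)`. -/
def S (σ : ℝ → ℝ) (a b : ℝ) (n : ℕ) (k : ℂ) : ℂ :=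
  ((2 : ℂ) ^ n)⁻¹ * ∫ y in simplex a b n, Sintegrand σ a b n k y

/-- `Δ(k) = ∑_{n=0}^∞ S_n^{(0,1)}(k)`. -/
def Δfun (σ : ℝ → ℝ) (k : ℂ) : ℂ := ∑' n, S σ 0 1 n k

/-- `σ` is absolutely continuous on `[0,1]`: fundamental-theorem-of-calculus
characterization with integrable derivative. -/
def sigmaAC (σ : ℝ → ℝ) : Prop :=
  IntegrableOn (deriv σ) (Set.Icc 0 1) ∧
    ∀ x ∈ Set.Icc (0 : ℝ) 1, σ x = σ 0 + ∫ t in (0 : ℝ)..x, deriv σ t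

/-- `Ψ(k,x,y)`, defined symmetrically. -/
def Psi (σ : ℝ → ℝ) (k : ℂ) (x y : ℝ) : ℂ :=
  if y ≤ x then (∑' n, S σ 0 y n k) * (∑' n, S σ x 1 n k)
  else (∑' n, S σ 0 x n k) * (∑' n, S σ y 1 n k)

namespace Stmt16Aux


lemma norm_sin_le_exp (z : ℂ) : ‖Complex.sin z‖ ≤ Real.exp |z.im| := by
  have h1 : ‖Complex.exp (-z * Complex.I)‖ = Real.exp z.im := by
    rw [Complex.norm_exp]; congr 1; simp [Complex.mul_re]
  have h2 : ‖Complex.exp (z * Complex.I)‖ = Real.exp (-z.im) := by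
    rw [Complex.norm_exp]; congr 1; simp [Complex.mul_re]
  have key : ‖Complex.sin z‖ ≤ (Real.exp z.im + Real.exp (-z.im)) / 2 := by
    rw [Complex.sin]
    rw [norm_div, norm_mul, Complex.norm_I, mul_one]
    have : ‖(2 : ℂ)‖ = 2 := by simp
    rw [this]
    have := norm_sub_le (Complex.exp (-z * Complex.I)) (Complex.exp (z * Complex.I))
    rw [h1, h2] at this
    linarith
  refine key.trans ?_
  have e1 : Real.exp z.im ≤ Real.exp |z.im| := Real.exp_le_exp.2 (le_abs_self _)
  have e2 : Real.exp (-z.im) ≤ Real.exp |z.im| := Real.exp_le_exp.2 (neg_le_abs _)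
  linarith

lemma measurableSet_mono (n : ℕ) : MeasurableSet {y : Fin n → ℝ | Monotone y} := by
  have h : {y : Fin n → ℝ | Monotone y}
      = ⋂ (i : Fin n) (j : Fin n) (_ : i ≤ j), {y : Fin n → ℝ | y i ≤ y j} := by
    ext y
    simp only [Set.mem_iInter, Set.mem_setOf_eq]
    exact ⟨fun h i j hij => h hij, fun h _ _ hij => h _ _ hij⟩
  rw [h]
  exact MeasurableSet.iInter fun i => MeasurableSet.iInter fun j =>
    MeasurableSet.iInter fun _ =>
      measurableSet_le (measurable_pi_apply i) (measurable_pi_apply j)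

lemma measurableSet_strictMonoComp (n : ℕ) (e : Equiv.Perm (Fin n)) :
    MeasurableSet {y : Fin n → ℝ | StrictMono fun i => y (e i)} := by
  have h : {y : Fin n → ℝ | StrictMono fun i => y (e i)}
      = ⋂ (i : Fin n) (j : Fin n) (_ : i < j), {y : Fin n → ℝ | y (e i) < y (e j)} := by
    ext y
    simp only [Set.mem_iInter, Set.mem_setOf_eq]
    exact ⟨fun h i j hij => h hij, fun h _ _ hij => h _ _ hij⟩
  rw [h]
  exact MeasurableSet.iInter fun i => MeasurableSet.iInter fun j =>
    MeasurableSet.iInter fun _ =>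
      measurableSet_lt (measurable_pi_apply _) (measurable_pi_apply _)

lemma measurableSet_simplex (a b : ℝ) (n : ℕ) : MeasurableSet (simplex a b n) := by
  have h : simplex a b n
      = {y : Fin n → ℝ | Monotone y} ∩ ⋂ i, (fun y : Fin n → ℝ => y i) ⁻¹' Set.Icc a b := by
    ext y; simp [simplex, Set.mem_iInter]
  rw [h]
  exact (measurableSet_mono n).inter (MeasurableSet.iInter fun i =>
    (measurable_pi_apply i) measurableSet_Icc)

lemma diag_null (n : ℕ) {i j : Fin n} (hij : i ≠ j) :
    (volume : Measure (Fin n → ℝ)) {y | y i = y j} = 0 := by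
  have h1 : {y : Fin n → ℝ | y i = y j}
      = (LinearMap.ker ((LinearMap.proj i : (Fin n → ℝ) →ₗ[ℝ] ℝ) - LinearMap.proj j) :
          Submodule ℝ (Fin n → ℝ)) := by
    ext y
    simp [LinearMap.mem_ker, sub_eq_zero, eq_comm]
  rw [h1]
  refine Measure.addHaar_submodule _ _ ?_
  intro htop
  have hmem : Pi.single i (1:ℝ) ∈ (LinearMap.ker ((LinearMap.proj i : (Fin n → ℝ) →ₗ[ℝ] ℝ)
      - LinearMap.proj j)) := htop ▸ Submodule.mem_top
  simp only [LinearMap.mem_ker, LinearMap.sub_apply, LinearMap.proj_apply] at hmem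
  rw [Pi.single_eq_same, Pi.single_eq_of_ne (Ne.symm hij)] at hmem
  norm_num at hmem

lemma setIntegral_strictMono_eq (n : ℕ) (f : ℝ → ℝ) (e : Equiv.Perm (Fin n)) :
    ∫ y in {y : Fin n → ℝ | StrictMono fun i => y (e i)}, ∏ p, f (y p)
      = ∫ y in {y : Fin n → ℝ | StrictMono y}, ∏ p, f (y p) := by
  set ψ : (Fin n → ℝ) ≃ᵐ (Fin n → ℝ) :=
    (MeasurableEquiv.piCongrLeft (fun _ => ℝ) (e : Fin n ≃ Fin n)).symm with hψ
  have hψcoe : ∀ (x : Fin n → ℝ) (p : Fin n), ψ x p = x (e p) := by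
    intro x p
    exact Equiv.piCongrLeft_symm_apply (fun _ => ℝ) (e : Fin n ≃ Fin n) x p
  have hmp : MeasurePreserving ψ (volume : Measure (Fin n → ℝ)) volume :=
    (volume_measurePreserving_piCongrLeft (fun _ => ℝ) (e : Fin n ≃ Fin n)).symm _
  have hpre : ψ ⁻¹' {y : Fin n → ℝ | StrictMono y}
      = {y : Fin n → ℝ | StrictMono fun i => y (e i)} := by
    ext x
    simp only [Set.mem_preimage, Set.mem_setOf_eq]
    constructor
    · intro h
      have : (fun i => x (e i)) = ψ x := by funext p; rw [hψcoe]
      rw [this]; exact h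
    · intro h
      have : ψ x = fun i => x (e i) := by funext p; rw [hψcoe]
      rw [this]; exact h
  calc ∫ y in {y : Fin n → ℝ | StrictMono fun i => y (e i)}, ∏ p, f (y p)
      = ∫ x in ψ ⁻¹' {y : Fin n → ℝ | StrictMono y}, (fun y => ∏ p, f (y p)) (ψ x) := by
        rw [hpre]
        refine setIntegral_congr_fun (measurableSet_strictMonoComp n e) ?_
        intro x _
        simp only
        rw [show (∏ p, f (ψ x p)) = ∏ p, f (x (e p)) from by
          refine Finset.prod_congr rfl fun p _ => by rw [hψcoe]]
        exact (Equiv.prod_comp e fun p => f (x p)).symm ▸ rfl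
    _ = ∫ y in {y : Fin n → ℝ | StrictMono y}, ∏ p, f (y p) := by
        simpa using hmp.setIntegral_preimage_emb ψ.measurableEmbedding
          (fun y => ∏ p, f (y p)) {y | StrictMono y}


lemma mono_prod_le (n : ℕ) (f : ℝ → ℝ) (hf : Integrable f) (hf0 : ∀ t, 0 ≤ f t) :
    ∫ y in {y : Fin n → ℝ | Monotone y}, ∏ p, f (y p) ≤ (∫ t, f t) ^ n / (Nat.factorial n : ℝ) := by
  classical
  have hprod_int : Integrable (fun y : Fin n → ℝ => ∏ p, f (y p)) :=
    Integrable.fintype_prod (f := fun _ : Fin n => f) (fun _ => hf)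
  have hprod_nonneg : ∀ y : Fin n → ℝ, 0 ≤ ∏ p, f (y p) := fun y =>
    Finset.prod_nonneg fun p _ => hf0 _
  set A : Equiv.Perm (Fin n) → Set (Fin n → ℝ) :=
    fun e => {y : Fin n → ℝ | StrictMono fun i => y (e i)} with hA
  have hAmeas : ∀ e, MeasurableSet (A e) := fun e => measurableSet_strictMonoComp n e
  have hAdisj : (Set.univ : Set (Equiv.Perm (Fin n))).Pairwise (Function.onFun Disjoint A) := by
    intro e _ e' _ hee
    rw [Function.onFun_apply, Set.disjoint_left]
    intro y hy hy'
    apply hee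
    have hfm : StrictMono fun i => y (e i) := hy
    have hgm : StrictMono fun i => y (e' i) := hy'
    have hrange : Set.range (fun i => y (e i)) = Set.range (fun i => y (e' i)) := by
      have h1 : Set.range (fun i => y (e i)) = Set.range y :=
        Function.Surjective.range_comp e.surjective y
      have h2 : Set.range (fun i => y (e' i)) = Set.range y :=
        Function.Surjective.range_comp e'.surjective y
      rw [h1, h2]
    have heq : (fun i => y (e i)) = fun i => y (e' i) :=
      (hfm.range_inj hgm).1 hrange
    have hyinj : Function.Injective y := by
      have h := hfm.injective.comp e.symm.injective
      have : ((fun i => y (e i)) ∘ e.symm) = y := by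
        funext j; simp
      rwa [this] at h
    exact Equiv.ext fun i => hyinj (congrFun heq i)
  have hAeq : ∀ e, (∫ y in A e, ∏ p, f (y p)) = ∫ y in {y : Fin n → ℝ | StrictMono y}, ∏ p, f (y p) :=
    fun e => setIntegral_strictMono_eq n f e
  -- sum over permutations
  have hsum : ∑ e : Equiv.Perm (Fin n), (∫ y in A e, ∏ p, f (y p))
      = ∫ y in ⋃ e ∈ (Finset.univ : Finset (Equiv.Perm (Fin n))), A e, ∏ p, f (y p) := by
    rw [integral_biUnion_finset Finset.univ (fun e _ => hAmeas e)
      (by simpa using hAdisj) (fun e _ => hprod_int.integrableOn)]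
  have hle_univ : (∫ y in ⋃ e ∈ (Finset.univ : Finset (Equiv.Perm (Fin n))), A e, ∏ p, f (y p))
      ≤ ∫ y : Fin n → ℝ, ∏ p, f (y p) :=
    setIntegral_le_integral hprod_int (Filter.Eventually.of_forall hprod_nonneg)
  have htotal : (∫ y : Fin n → ℝ, ∏ p, f (y p)) = (∫ t, f t) ^ n := by
    rw [integral_fintype_prod_volume_eq_pow (ι := Fin n) f, Fintype.card_fin]
  have hcard : (∑ e : Equiv.Perm (Fin n), (∫ y in A e, ∏ p, f (y p)))
      = (Nat.factorial n : ℝ) * ∫ y in {y : Fin n → ℝ | StrictMono y}, ∏ p, f (y p) := by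
    rw [Finset.sum_congr rfl fun e _ => hAeq e]
    simp [Finset.sum_const, Fintype.card_perm]
  have hkey : (Nat.factorial n : ℝ) * (∫ y in {y : Fin n → ℝ | StrictMono y}, ∏ p, f (y p))
      ≤ (∫ t, f t) ^ n := by
    rw [← hcard, hsum, ← htotal]; exact hle_univ
  have hSM : (∫ y in {y : Fin n → ℝ | Monotone y}, ∏ p, f (y p))
      = ∫ y in {y : Fin n → ℝ | StrictMono y}, ∏ p, f (y p) := by
    refine setIntegral_congr_set ?_
    rw [MeasureTheory.ae_eq_set]
    constructor
    · -- Monotone \ StrictMono is null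
      have hsub : {y : Fin n → ℝ | Monotone y} \ {y : Fin n → ℝ | StrictMono y}
          ⊆ ⋃ (p : Fin n × Fin n) (_ : p.1 ≠ p.2), {y : Fin n → ℝ | y p.1 = y p.2} := by
        rintro y ⟨hmono, hns⟩
        simp only [Set.mem_setOf_eq, StrictMono] at hns
        push_neg at hns
        obtain ⟨i, j, hij, hle⟩ := hns
        refine Set.mem_iUnion.2 ⟨(i, j), Set.mem_iUnion.2 ⟨hij.ne, ?_⟩⟩
        exact le_antisymm (hmono hij.le) hle
      refine measure_mono_null hsub ?_
      refine measure_iUnion_null fun p => ?_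
      by_cases hp : p.1 ≠ p.2
      · simpa [hp] using diag_null n hp
      · simp [hp]
    · have : {y : Fin n → ℝ | StrictMono y} \ {y : Fin n → ℝ | Monotone y} = ∅ := by
        ext y; simp only [Set.mem_diff, Set.mem_setOf_eq, Set.mem_empty_iff_false, iff_false,
          not_and, not_not]
        exact fun h => h.monotone
      simp [this]
  rw [hSM, le_div_iff₀ (by positivity : (0:ℝ) < (Nat.factorial n : ℝ))]
  linarith [hkey]

/-! ### Sigma machinery -/

def clampI (t : ℝ) : ℝ := max 0 (min 1 t)

lemma clampI_mem (t : ℝ) : clampI t ∈ Set.Icc (0:ℝ) 1 :=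
  ⟨le_max_left _ _, max_le (by norm_num) (min_le_left _ _)⟩

lemma clampI_eq {t : ℝ} (h : t ∈ Set.Icc (0:ℝ) 1) : clampI t = t := by
  rw [clampI, min_eq_right h.2, max_eq_right h.1]

lemma continuous_clampI : Continuous clampI :=
  continuous_const.max (continuous_const.min continuous_id)

def mfun (σ : ℝ → ℝ) : ℝ → ℝ := fun t => σ (clampI t)

def gmfun (σ : ℝ → ℝ) : ℝ → ℝ := fun t => |deriv σ t| / mfun σ t

def Pfun (σ : ℝ → ℝ) : ℝ → ℝ := fun u => ∫ t in (0:ℝ)..u, (mfun σ t)⁻¹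

def phaseM (σ : ℝ → ℝ) (a b : ℝ) (n : ℕ) (y : Fin n → ℝ) : ℝ :=
  ∑ p ∈ Finset.range (n + 1),
    (-1 : ℝ) ^ p * (Pfun σ (nodes a b n y (p+1)) - Pfun σ (nodes a b n y p))

def Gfun (σ : ℝ → ℝ) (a b : ℝ) (n : ℕ) (k : ℂ) (y : Fin n → ℝ) : ℂ :=
  ((∏ p, deriv σ (y p) / mfun σ (y p) : ℝ) : ℂ) * Complex.sin (k * ((phaseM σ a b n y : ℝ) : ℂ))

section SigmaLemmas

variable {σ : ℝ → ℝ} {σmin : ℝ}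

lemma continuousOn_sigma (hσAC : sigmaAC σ) : ContinuousOn σ (Set.Icc 0 1) := by
  have hii : IntervalIntegrable (deriv σ) volume 0 1 := by
    apply IntegrableOn.intervalIntegrable
    rw [Set.uIcc_of_le (by norm_num : (0:ℝ) ≤ 1)]
    exact hσAC.1
  have h1 : ContinuousOn (fun x : ℝ => σ 0 + ∫ t in (0:ℝ)..x, deriv σ t) (Set.Icc 0 1) := by
    have := intervalIntegral.continuousOn_primitive_interval' hii
      (by rw [Set.uIcc_of_le (by norm_num : (0:ℝ) ≤ 1)]; exact Set.left_mem_Icc.2 (by norm_num))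
    rw [Set.uIcc_of_le (by norm_num : (0:ℝ) ≤ 1)] at this
    exact continuousOn_const.add this
  exact h1.congr fun x hx => hσAC.2 x hx

variable (hσcont : ContinuousOn σ (Set.Icc 0 1))
  (hmin : 0 < σmin) (hlow : ∀ t ∈ Set.Icc (0:ℝ) 1, σmin ≤ σ t)

include hσcont in
lemma mfun_continuous : Continuous (mfun σ) :=
  hσcont.comp_continuous continuous_clampI clampI_mem

lemma mfun_eq {t : ℝ} (h : t ∈ Set.Icc (0:ℝ) 1) : mfun σ t = σ t := by
  rw [mfun, clampI_eq h]

include hlow in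
lemma mfun_low (t : ℝ) : σmin ≤ mfun σ t := hlow _ (clampI_mem t)

include hmin hlow in
lemma mfun_pos (t : ℝ) : 0 < mfun σ t := lt_of_lt_of_le hmin (mfun_low hlow t)

include hmin hlow in
lemma gmfun_nonneg (t : ℝ) : 0 ≤ gmfun σ t :=
  div_nonneg (abs_nonneg _) (mfun_pos hmin hlow t).le

include hσcont hmin hlow in
lemma continuous_invm : Continuous fun t => (mfun σ t)⁻¹ :=
  (mfun_continuous hσcont).inv₀ fun t => (mfun_pos hmin hlow t).ne'

include hσcont hmin hlow in
lemma continuous_Pfun : Continuous (Pfun σ) :=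
  intervalIntegral.continuous_primitive
    (fun a b => ((continuous_invm hσcont hmin hlow).intervalIntegrable a b)) 0

include hσcont hmin hlow in
lemma integrableOn_gmfun (hσAC : sigmaAC σ) : IntegrableOn (gmfun σ) (Set.Icc 0 1) := by
  have habs : IntegrableOn (fun t => |deriv σ t|) (Set.Icc 0 1) := hσAC.1.abs
  have h := habs.bdd_mul (f := fun t => (mfun σ t)⁻¹)
    ((continuous_invm hσcont hmin hlow).aestronglyMeasurable)
    (c := σmin⁻¹) (Filter.Eventually.of_forall fun t => by
      rw [Real.norm_eq_abs, abs_of_pos (inv_pos.2 (mfun_pos hmin hlow t))]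
      exact inv_anti₀ hmin (mfun_low hlow t))
  refine IntegrableOn.congr_fun (f := fun t => (mfun σ t)⁻¹ * |deriv σ t|) h ?_ measurableSet_Icc
  intro t _
  simp [gmfun, div_eq_mul_inv, mul_comm]

end SigmaLemmas

/-! ### nodes lemmas -/

lemma nodes_zero (a b : ℝ) (n : ℕ) (y : Fin n → ℝ) : nodes a b n y 0 = a := by
  rw [nodes, dif_neg (by omega), if_pos rfl]

lemma nodes_top (a b : ℝ) (n : ℕ) (y : Fin n → ℝ) : nodes a b n y (n+1) = b := by
  rw [nodes, dif_neg (by omega), if_neg (by omega)]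

lemma nodes_mem {a b : ℝ} (hab : a ≤ b) {n : ℕ} {y : Fin n → ℝ} (hy : y ∈ simplex a b n)
    (p : ℕ) : nodes a b n y p ∈ Set.Icc a b := by
  rw [nodes]
  split_ifs with h h0
  · exact hy.2 _
  · exact ⟨le_rfl, hab⟩
  · exact ⟨hab, le_rfl⟩

lemma nodes_le_succ {a b : ℝ} (hab : a ≤ b) {n : ℕ} {y : Fin n → ℝ} (hy : y ∈ simplex a b n)
    (p : ℕ) : nodes a b n y p ≤ nodes a b n y (p+1) := by
  obtain ⟨hmono, hmem⟩ := hy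
  by_cases hp0 : p = 0
  · subst hp0
    rw [nodes_zero]
    by_cases hn : 1 ≤ n
    · rw [nodes, dif_pos ⟨le_rfl, hn⟩]
      exact (hmem _).1
    · rw [nodes, dif_neg (by omega), if_neg (by omega)]
      exact hab
  · by_cases hpn : 1 ≤ p ∧ p ≤ n
    · rw [nodes, dif_pos hpn]
      by_cases hq : p + 1 ≤ n
      · rw [nodes, dif_pos ⟨by omega, hq⟩]
        exact hmono (by simp only [Fin.mk_le_mk]; omega)
      · rw [nodes, dif_neg (by omega), if_neg (by omega)]
        exact (hmem _).2
    · rw [nodes, dif_neg hpn, if_neg hp0, nodes, dif_neg (by omega), if_neg (by omega)]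

section PhaseLemmas

variable {σ : ℝ → ℝ} {σmin : ℝ} {a b : ℝ} {n : ℕ} {y : Fin n → ℝ} {k : ℂ} {u v : ℝ}
variable (hσcont : ContinuousOn σ (Set.Icc 0 1)) (hmin : 0 < σmin)
  (hlow : ∀ t ∈ Set.Icc (0:ℝ) 1, σmin ≤ σ t)
  (ha : 0 ≤ a) (hab : a ≤ b) (hb1 : b ≤ 1)

include hσcont hmin hlow in
lemma intervalIntegrable_one_div_sigma (hu : u ∈ Set.Icc (0:ℝ) 1) (hv : v ∈ Set.Icc (0:ℝ) 1) :
    IntervalIntegrable (fun ξ => 1 / σ ξ) volume u v := by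
  have h := (continuous_invm hσcont hmin hlow).intervalIntegrable (μ := volume) u v
  constructor
  · refine (h.1).congr_fun (fun t ht => ?_) measurableSet_Ioc
    have htm : t ∈ Set.Icc (0:ℝ) 1 := ⟨le_trans hu.1 ht.1.le, le_trans ht.2 hv.2⟩
    show (mfun σ t)⁻¹ = 1 / σ t
    rw [one_div, mfun_eq htm]
  · refine (h.2).congr_fun (fun t ht => ?_) measurableSet_Ioc
    have htm : t ∈ Set.Icc (0:ℝ) 1 := ⟨le_trans hv.1 ht.1.le, le_trans ht.2 hu.2⟩
    show (mfun σ t)⁻¹ = 1 / σ t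
    rw [one_div, mfun_eq htm]

include hσcont hmin hlow in
lemma intervalIntegrable_absd (hσAC : sigmaAC σ) (hu : u ∈ Set.Icc (0:ℝ) 1)
    (hv : v ∈ Set.Icc (0:ℝ) 1) :
    IntervalIntegrable (fun ξ => |deriv σ ξ| / σ ξ) volume u v := by
  have h := integrableOn_gmfun hσcont hmin hlow hσAC
  constructor
  · refine ((h.mono_set (fun t ht => ⟨le_trans hu.1 ht.1.le, le_trans ht.2 hv.2⟩)).congr_fun
      (fun t ht => ?_) measurableSet_Ioc)
    have htm : t ∈ Set.Icc (0:ℝ) 1 := ⟨le_trans hu.1 ht.1.le, le_trans ht.2 hv.2⟩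
    simp only [gmfun]
    rw [mfun_eq htm]
  · refine ((h.mono_set (fun t ht => ⟨le_trans hv.1 ht.1.le, le_trans ht.2 hu.2⟩)).congr_fun
      (fun t ht => ?_) measurableSet_Ioc)
    have htm : t ∈ Set.Icc (0:ℝ) 1 := ⟨le_trans hv.1 ht.1.le, le_trans ht.2 hu.2⟩
    simp only [gmfun]
    rw [mfun_eq htm]

include ha hab hb1 in
lemma nodes_mem01 (hy : y ∈ simplex a b n) (p : ℕ) : nodes a b n y p ∈ Set.Icc (0:ℝ) 1 :=
  Set.Icc_subset_Icc ha hb1 (nodes_mem hab hy p)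

include hσcont hmin hlow ha hab hb1 in
lemma nodes_integral_eq (hy : y ∈ simplex a b n) (p : ℕ) :
    (∫ ξ in (nodes a b n y p)..(nodes a b n y (p+1)), 1 / σ ξ)
      = Pfun σ (nodes a b n y (p+1)) - Pfun σ (nodes a b n y p) := by
  have hmemp := nodes_mem01 ha hab hb1 hy p
  have hmemq := nodes_mem01 ha hab hb1 hy (p+1)
  have hcong : (∫ ξ in (nodes a b n y p)..(nodes a b n y (p+1)), 1 / σ ξ)
      = ∫ ξ in (nodes a b n y p)..(nodes a b n y (p+1)), (mfun σ ξ)⁻¹ := by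
    refine intervalIntegral.integral_congr fun t ht => ?_
    have htm : t ∈ Set.Icc (0:ℝ) 1 := Set.uIcc_subset_Icc hmemp hmemq ht
    rw [one_div, mfun_eq htm]
  rw [hcong, Pfun]
  exact (intervalIntegral.integral_interval_sub_left
    ((continuous_invm hσcont hmin hlow).intervalIntegrable _ _)
    ((continuous_invm hσcont hmin hlow).intervalIntegrable _ _)).symm

include hσcont hmin hlow ha hab hb1 in
lemma phase_eq_phaseM (hy : y ∈ simplex a b n) :
    phase σ a b n y = phaseM σ a b n y := by
  refine Finset.sum_congr rfl fun p _ => ?_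
  rw [nodes_integral_eq hσcont hmin hlow ha hab hb1 hy p]

include hσcont hmin hlow ha hab hb1 in
lemma phase_abs_le (hy : y ∈ simplex a b n) :
    |phase σ a b n y| ≤ ∫ ξ in a..b, 1 / σ ξ := by
  have hIpos : ∀ p : ℕ, 0 ≤ ∫ ξ in (nodes a b n y p)..(nodes a b n y (p+1)), 1 / σ ξ := by
    intro p
    refine intervalIntegral.integral_nonneg (nodes_le_succ hab hy p) fun t ht => ?_
    have hp := nodes_mem01 ha hab hb1 hy p
    have hq := nodes_mem01 ha hab hb1 hy (p+1)
    have htm : t ∈ Set.Icc (0:ℝ) 1 := ⟨le_trans hp.1 ht.1, le_trans ht.2 hq.2⟩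
    have : 0 < σ t := lt_of_lt_of_le hmin (hlow t htm)
    positivity
  have hsum : ∑ p ∈ Finset.range (n+1),
      (∫ ξ in (nodes a b n y p)..(nodes a b n y (p+1)), 1 / σ ξ) = ∫ ξ in a..b, 1 / σ ξ := by
    have := intervalIntegral.sum_integral_adjacent_intervals
      (a := fun p => nodes a b n y p) (n := n+1) (f := fun ξ => 1 / σ ξ) (μ := volume)
      (fun p _ => intervalIntegrable_one_div_sigma hσcont hmin hlow
        (nodes_mem01 ha hab hb1 hy p) (nodes_mem01 ha hab hb1 hy (p+1)))
    simpa only [nodes_zero, nodes_top] using this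
  calc |phase σ a b n y|
      ≤ ∑ p ∈ Finset.range (n+1),
          |(-1:ℝ)^p * ∫ ξ in (nodes a b n y p)..(nodes a b n y (p+1)), 1 / σ ξ| :=
        Finset.abs_sum_le_sum_abs _ _
    _ = ∑ p ∈ Finset.range (n+1),
          (∫ ξ in (nodes a b n y p)..(nodes a b n y (p+1)), 1 / σ ξ) := by
        refine Finset.sum_congr rfl fun p _ => ?_
        rw [abs_mul, abs_pow, abs_neg, abs_one, one_pow, one_mul, abs_of_nonneg (hIpos p)]
    _ = ∫ ξ in a..b, 1 / σ ξ := hsum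

include hσcont hmin hlow ha hab hb1 in
lemma Sintegrand_eq_Gfun (hy : y ∈ simplex a b n) :
    Sintegrand σ a b n k y = Gfun σ a b n k y := by
  rw [Sintegrand, Gfun]
  have h1 : (∏ p, deriv σ (y p) / σ (y p)) = ∏ p, deriv σ (y p) / mfun σ (y p) := by
    refine Finset.prod_congr rfl fun p _ => ?_
    rw [mfun_eq (Set.Icc_subset_Icc ha hb1 (hy.2 p))]
  rw [h1, phase_eq_phaseM hσcont hmin hlow ha hab hb1 hy]

lemma measurable_nodes (a b : ℝ) (n p : ℕ) : Measurable fun y : Fin n → ℝ => nodes a b n y p := by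
  by_cases h : 1 ≤ p ∧ p ≤ n
  · simp only [nodes, dif_pos h]
    exact measurable_pi_apply _
  · by_cases h0 : p = 0 <;> simp only [nodes, dif_neg h, h0, if_true, if_false] <;>
      exact measurable_const

include hσcont hmin hlow in
lemma measurable_phaseM : Measurable (phaseM σ a b n) := by
  refine Finset.measurable_sum _ fun p _ => ?_
  exact measurable_const.mul
    (((continuous_Pfun hσcont hmin hlow).measurable.comp (measurable_nodes a b n (p+1))).sub
     ((continuous_Pfun hσcont hmin hlow).measurable.comp (measurable_nodes a b n p)))

include hσcont hmin hlow in
lemma stronglyMeasurable_Gfun : StronglyMeasurable (Gfun σ a b n k) := by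
  apply Measurable.stronglyMeasurable
  refine Measurable.mul ?_ ?_
  · exact Complex.measurable_ofReal.comp (Finset.measurable_prod _ fun p _ =>
      ((measurable_deriv σ).comp (measurable_pi_apply p)).div
        ((mfun_continuous hσcont).measurable.comp (measurable_pi_apply p)))
  · exact Complex.continuous_sin.measurable.comp
      (measurable_const.mul (Complex.measurable_ofReal.comp
        (measurable_phaseM hσcont hmin hlow)))

include hσcont hmin hlow ha hab hb1 in
lemma Gfun_norm_le (hy : y ∈ simplex a b n) :
    ‖Gfun σ a b n k y‖ ≤ Real.exp (|k.im| * ∫ ξ in a..b, 1 / σ ξ)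
      * ∏ p, Set.indicator (Set.Icc a b) (gmfun σ) (y p) := by
  rw [Gfun, norm_mul]
  have h1 : ‖((∏ p, deriv σ (y p) / mfun σ (y p) : ℝ) : ℂ)‖ = ∏ p, gmfun σ (y p) := by
    rw [Complex.norm_real, Real.norm_eq_abs, Finset.abs_prod]
    refine Finset.prod_congr rfl fun p _ => ?_
    rw [abs_div, abs_of_pos (mfun_pos hmin hlow (y p))]
    rfl
  have h2 : ‖Complex.sin (k * ((phaseM σ a b n y : ℝ) : ℂ))‖
      ≤ Real.exp (|k.im| * ∫ ξ in a..b, 1 / σ ξ) := by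
    refine (norm_sin_le_exp _).trans ?_
    rw [Real.exp_le_exp]
    have him : (k * ((phaseM σ a b n y : ℝ) : ℂ)).im = k.im * phaseM σ a b n y := by
      simp [Complex.mul_im]
    rw [him, abs_mul]
    have hple : |phaseM σ a b n y| ≤ ∫ ξ in a..b, 1 / σ ξ := by
      rw [← phase_eq_phaseM hσcont hmin hlow ha hab hb1 hy]
      exact phase_abs_le hσcont hmin hlow ha hab hb1 hy
    exact mul_le_mul_of_nonneg_left hple (abs_nonneg _)
  have h3 : (∏ p, gmfun σ (y p)) = ∏ p, Set.indicator (Set.Icc a b) (gmfun σ) (y p) := by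
    refine Finset.prod_congr rfl fun p _ => ?_
    rw [Set.indicator_of_mem (hy.2 p)]
  calc ‖((∏ p, deriv σ (y p) / mfun σ (y p) : ℝ) : ℂ)‖
        * ‖Complex.sin (k * ((phaseM σ a b n y : ℝ) : ℂ))‖
      ≤ (∏ p, gmfun σ (y p)) * Real.exp (|k.im| * ∫ ξ in a..b, 1 / σ ξ) := by
        rw [h1]
        refine mul_le_mul_of_nonneg_left h2 (Finset.prod_nonneg fun p _ =>
          gmfun_nonneg hmin hlow _)
    _ = Real.exp (|k.im| * ∫ ξ in a..b, 1 / σ ξ)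
          * ∏ p, Set.indicator (Set.Icc a b) (gmfun σ) (y p) := by
        rw [h3, mul_comm]

include hσcont hmin hlow ha hab hb1 in
lemma S_norm_le (hσAC : sigmaAC σ) (n : ℕ) (k : ℂ) :
    ‖S σ a b n k‖ ≤ Real.exp (|k.im| * ∫ ξ in a..b, 1 / σ ξ) *
      (((∫ ξ in a..b, |deriv σ ξ| / σ ξ) / 2) ^ n / (Nat.factorial n : ℝ)) := by
  classical
  set Tab : ℝ := ∫ ξ in a..b, 1 / σ ξ with hTab
  set Cab : ℝ := ∫ ξ in a..b, |deriv σ ξ| / σ ξ with hCab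
  set E : ℝ := Real.exp (|k.im| * Tab) with hE
  set gab : ℝ → ℝ := Set.indicator (Set.Icc a b) (gmfun σ) with hgab
  have hgab0 : ∀ t, 0 ≤ gab t := fun t =>
    Set.indicator_nonneg (fun s _ => gmfun_nonneg hmin hlow s) t
  have hgab_int : Integrable gab := by
    rw [hgab, integrable_indicator_iff measurableSet_Icc]
    exact (integrableOn_gmfun hσcont hmin hlow hσAC).mono_set
      (Set.Icc_subset_Icc ha hb1)
  have hgab_eq : (∫ t, gab t) = Cab := by
    rw [hgab, integral_indicator measurableSet_Icc, MeasureTheory.integral_Icc_eq_integral_Ioc,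
      ← intervalIntegral.integral_of_le hab]
    refine intervalIntegral.integral_congr fun t ht => ?_
    have htm : t ∈ Set.Icc (0:ℝ) 1 :=
      Set.uIcc_subset_Icc ⟨ha, hab.trans hb1⟩ ⟨ha.trans hab, hb1⟩ ht
    simp only [gmfun]
    rw [mfun_eq htm]
  have hρint : Integrable (fun y : Fin n → ℝ => ∏ p, gab (y p)) :=
    Integrable.fintype_prod (f := fun _ : Fin n => gab) (fun _ => hgab_int)
  have hρ0 : ∀ y : Fin n → ℝ, 0 ≤ ∏ p, gab (y p) := fun y =>
    Finset.prod_nonneg fun p _ => hgab0 _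
  -- bound the set integral of the product over the simplex
  have hsimplex_le : (∫ y in simplex a b n, ∏ p, gab (y p)) ≤ Cab ^ n / (Nat.factorial n : ℝ) := by
    have h1 : (∫ y in simplex a b n, ∏ p, gab (y p))
        ≤ ∫ y in {y : Fin n → ℝ | Monotone y}, ∏ p, gab (y p) :=
      setIntegral_mono_set hρint.integrableOn (Filter.Eventually.of_forall hρ0)
        (HasSubset.Subset.eventuallyLE fun y hy => hy.1)
    refine h1.trans ?_
    have := mono_prod_le n gab hgab_int hgab0
    rwa [hgab_eq] at this
  have hGint : IntegrableOn (Gfun σ a b n k) (simplex a b n) := by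
    refine Integrable.mono' ((hρint.const_mul E).integrableOn)
      (stronglyMeasurable_Gfun hσcont hmin hlow).aestronglyMeasurable ?_
    rw [ae_restrict_iff' (measurableSet_simplex a b n)]
    exact Filter.Eventually.of_forall fun y hy =>
      Gfun_norm_le hσcont hmin hlow ha hab hb1 hy
  have hSint_eq : (∫ y in simplex a b n, Sintegrand σ a b n k y)
      = ∫ y in simplex a b n, Gfun σ a b n k y :=
    setIntegral_congr_fun (measurableSet_simplex a b n) fun y hy =>
      Sintegrand_eq_Gfun hσcont hmin hlow ha hab hb1 hy
  have hnorm1 : ‖∫ y in simplex a b n, Gfun σ a b n k y‖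
      ≤ ∫ y in simplex a b n, E * ∏ p, gab (y p) := by
    refine norm_integral_le_of_norm_le ((hρint.const_mul E).integrableOn) ?_
    rw [ae_restrict_iff' (measurableSet_simplex a b n)]
    exact Filter.Eventually.of_forall fun y hy =>
      Gfun_norm_le hσcont hmin hlow ha hab hb1 hy
  have hnorm2 : (∫ y in simplex a b n, E * ∏ p, gab (y p))
      = E * ∫ y in simplex a b n, ∏ p, gab (y p) := by
    simp_rw [← smul_eq_mul]
    rw [integral_smul]
  have hE0 : 0 ≤ E := Real.exp_nonneg _
  have hCab0 : 0 ≤ Cab := by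
    rw [← hgab_eq]
    exact integral_nonneg hgab0
  have hfinal : ‖∫ y in simplex a b n, Sintegrand σ a b n k y‖
      ≤ E * (Cab ^ n / (Nat.factorial n : ℝ)) := by
    rw [hSint_eq]
    refine hnorm1.trans ?_
    rw [hnorm2]
    exact mul_le_mul_of_nonneg_left hsimplex_le hE0
  rw [S, norm_mul]
  have h2n : ‖((2:ℂ) ^ n)⁻¹‖ = ((2:ℝ) ^ n)⁻¹ := by
    rw [norm_inv, norm_pow]
    norm_num
  rw [h2n]
  calc ((2:ℝ) ^ n)⁻¹ * ‖∫ y in simplex a b n, Sintegrand σ a b n k y‖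
      ≤ ((2:ℝ) ^ n)⁻¹ * (E * (Cab ^ n / (Nat.factorial n : ℝ))) := by
        exact mul_le_mul_of_nonneg_left hfinal (by positivity)
    _ = E * ((Cab / 2) ^ n / (Nat.factorial n : ℝ)) := by
        rw [div_pow]
        ring

end PhaseLemmas

section TsumBound

variable {σ : ℝ → ℝ} {σmin : ℝ} {a b : ℝ} {k : ℂ}
variable (hσcont : ContinuousOn σ (Set.Icc 0 1)) (hmin : 0 < σmin)
  (hlow : ∀ t ∈ Set.Icc (0:ℝ) 1, σmin ≤ σ t)
  (ha : 0 ≤ a) (hab : a ≤ b) (hb1 : b ≤ 1) (hσAC : sigmaAC σ)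

include hσcont hmin hlow ha hab hb1 hσAC in
lemma summable_norm_S : Summable fun n => ‖S σ a b n k‖ := by
  refine Summable.of_nonneg_of_le (fun n => norm_nonneg _)
    (fun n => S_norm_le hσcont hmin hlow ha hab hb1 hσAC n k) ?_
  exact (Real.summable_pow_div_factorial _).mul_left _

include hσcont hmin hlow ha hab hb1 hσAC in
lemma summable_S : Summable fun n => S σ a b n k :=
  Summable.of_norm (summable_norm_S hσcont hmin hlow ha hab hb1 hσAC)

include hσcont hmin hlow ha hab hb1 hσAC in
lemma tsum_S_norm_le :
    ‖∑' n, S σ a b n k‖ ≤ Real.exp ((∫ ξ in a..b, |deriv σ ξ| / σ ξ)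
      + |k.im| * ∫ ξ in a..b, 1 / σ ξ) := by
  set Cab : ℝ := ∫ ξ in a..b, |deriv σ ξ| / σ ξ with hCabdef
  set Tab : ℝ := ∫ ξ in a..b, 1 / σ ξ with hTabdef
  set E : ℝ := Real.exp (|k.im| * Tab) with hE
  have hC0 : 0 ≤ Cab := by
    refine intervalIntegral.integral_nonneg hab fun u hu => ?_
    have hum : u ∈ Set.Icc (0:ℝ) 1 := ⟨le_trans ha hu.1, le_trans hu.2 hb1⟩
    have : 0 < σ u := lt_of_lt_of_le hmin (hlow u hum)
    positivity
  have hmaj : Summable fun n => E * ((Cab / 2) ^ n / (Nat.factorial n : ℝ)) :=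
    (Real.summable_pow_div_factorial _).mul_left _
  calc ‖∑' n, S σ a b n k‖
      ≤ ∑' n, ‖S σ a b n k‖ :=
        norm_tsum_le_tsum_norm (summable_norm_S hσcont hmin hlow ha hab hb1 hσAC)
    _ ≤ ∑' n, E * ((Cab / 2) ^ n / (Nat.factorial n : ℝ)) :=
        Summable.tsum_le_tsum (fun n => S_norm_le hσcont hmin hlow ha hab hb1 hσAC n k)
          (summable_norm_S hσcont hmin hlow ha hab hb1 hσAC) hmaj
    _ = E * ∑' n, ((Cab / 2) ^ n / (Nat.factorial n : ℝ)) := tsum_mul_left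
    _ ≤ E * Real.exp (Cab / 2) := by
        refine mul_le_mul_of_nonneg_left ?_ (Real.exp_nonneg _)
        exact Summable.tsum_le_of_sum_range_le (Real.summable_pow_div_factorial _)
          (Real.sum_le_exp_of_nonneg (by positivity))
    _ ≤ Real.exp (Cab + |k.im| * Tab) := by
        rw [hE, ← Real.exp_add]
        exact Real.exp_le_exp.2 (by linarith)

end TsumBound

section ParamMeas

variable {σ : ℝ → ℝ} {σmin : ℝ} {k : ℂ} {n : ℕ}
variable (hσcont : ContinuousOn σ (Set.Icc 0 1)) (hmin : 0 < σmin)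
  (hlow : ∀ t ∈ Set.Icc (0:ℝ) 1, σmin ≤ σ t) (hσAC : sigmaAC σ)

lemma measurable_nodes_param {f g : ℝ × (Fin n → ℝ) → ℝ} (hf : Measurable f)
    (hg : Measurable g) (p : ℕ) :
    Measurable fun w => nodes (f w) (g w) n w.2 p := by
  by_cases h : 1 ≤ p ∧ p ≤ n
  · simp only [nodes, dif_pos h]
    exact (measurable_pi_apply _).comp measurable_snd
  · by_cases h0 : p = 0 <;> simp only [nodes, dif_neg h, h0, if_true, if_false]
    · exact hf
    · exact hg

include hσcont hmin hlow in
lemma measurable_Gfun_param {f g : ℝ × (Fin n → ℝ) → ℝ} (hf : Measurable f)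
    (hg : Measurable g) (k : ℂ) :
    Measurable fun w : ℝ × (Fin n → ℝ) => Gfun σ (f w) (g w) n k w.2 := by
  refine Measurable.mul ?_ ?_
  · exact Complex.measurable_ofReal.comp (Finset.measurable_prod _ fun p _ =>
      ((measurable_deriv σ).comp ((measurable_pi_apply p).comp measurable_snd)).div
        ((mfun_continuous hσcont).measurable.comp ((measurable_pi_apply p).comp measurable_snd)))
  · refine Complex.continuous_sin.measurable.comp
      (measurable_const.mul (Complex.measurable_ofReal.comp ?_))
    refine Finset.measurable_sum _ fun p _ => ?_
    exact measurable_const.mul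
      (((continuous_Pfun hσcont hmin hlow).measurable.comp
          (measurable_nodes_param hf hg (p+1))).sub
       ((continuous_Pfun hσcont hmin hlow).measurable.comp (measurable_nodes_param hf hg p)))

lemma measurableSet_simplex_param {f g : ℝ × (Fin n → ℝ) → ℝ} (hf : Measurable f)
    (hg : Measurable g) :
    MeasurableSet {w : ℝ × (Fin n → ℝ) | w.2 ∈ simplex (f w) (g w) n} := by
  have hset : {w : ℝ × (Fin n → ℝ) | w.2 ∈ simplex (f w) (g w) n}
      = (Prod.snd ⁻¹' {y : Fin n → ℝ | Monotone y})
        ∩ ⋂ i, ({w : ℝ × (Fin n → ℝ) | f w ≤ w.2 i} ∩ {w | w.2 i ≤ g w}) := by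
    ext w
    constructor
    · rintro ⟨h1, h2⟩
      exact ⟨h1, Set.mem_iInter.2 fun i => ⟨(h2 i).1, (h2 i).2⟩⟩
    · rintro ⟨h1, h2⟩
      exact ⟨h1, fun i => ⟨(Set.mem_iInter.1 h2 i).1, (Set.mem_iInter.1 h2 i).2⟩⟩
  rw [hset]
  exact (measurable_snd (measurableSet_mono n)).inter (MeasurableSet.iInter fun i =>
    (measurableSet_le hf
        (show Measurable fun w : ℝ × (Fin n → ℝ) => w.2 i from
          (measurable_pi_apply i).comp measurable_snd)).inter
      (measurableSet_le
        (show Measurable fun w : ℝ × (Fin n → ℝ) => w.2 i from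
          (measurable_pi_apply i).comp measurable_snd) hg))

include hσcont hmin hlow hσAC in
lemma aesm_tsum_right :
    AEStronglyMeasurable (fun y => ∑' n, S σ 0 y n k)
      (volume.restrict (Set.Ioo (0:ℝ) 1)) := by
  classical
  -- family of jointly measurable integrands
  let F : (n : ℕ) → ℝ × (Fin n → ℝ) → ℂ := fun n w =>
    Set.indicator {w : ℝ × (Fin n → ℝ) | w.2 ∈ simplex 0 w.1 n}
      (fun w => Gfun σ 0 w.1 n k w.2) w
  have hFmeas : ∀ n : ℕ, StronglyMeasurable
      (fun t : ℝ => ∫ z : Fin n → ℝ, F n (t, z)) := by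
    intro n
    refine StronglyMeasurable.integral_prod_right' (f := F n) ?_
    refine Measurable.stronglyMeasurable ?_
    exact Measurable.indicator
      (measurable_Gfun_param hσcont hmin hlow measurable_const measurable_fst k)
      (measurableSet_simplex_param measurable_const measurable_fst)
  have hrepr : ∀ (n : ℕ), ∀ t ∈ Set.Ioo (0:ℝ) 1,
      S σ 0 t n k = ((2:ℂ)^n)⁻¹ * ∫ z : Fin n → ℝ, F n (t, z) := by
    intro n t ht
    rw [S]
    congr 1
    rw [setIntegral_congr_fun (measurableSet_simplex 0 t n)
      (fun z hz => Sintegrand_eq_Gfun hσcont hmin hlow le_rfl ht.1.le ht.2.le hz),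
      ← integral_indicator (measurableSet_simplex 0 t n)]
    have hfun : (fun z : Fin n → ℝ => Set.indicator (simplex 0 t n) (Gfun σ 0 t n k) z)
        = fun z : Fin n → ℝ => F n (t, z) := by
      funext z
      by_cases hz : z ∈ simplex 0 t n
      · rw [Set.indicator_of_mem hz]
        show _ = Set.indicator _ _ _
        rw [Set.indicator_of_mem
          (show (t, z) ∈ {w : ℝ × (Fin n → ℝ) | w.2 ∈ simplex 0 w.1 n} from hz)]
      · rw [Set.indicator_of_notMem hz]
        show _ = Set.indicator _ _ _
        rw [Set.indicator_of_notMem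
          (show (t, z) ∉ {w : ℝ × (Fin n → ℝ) | w.2 ∈ simplex 0 w.1 n} from hz)]
    rw [hfun]
  refine aestronglyMeasurable_of_tendsto_ae atTop
    (f := fun N => fun t : ℝ => ∑ n ∈ Finset.range N, ((2:ℂ)^n)⁻¹ * ∫ z : Fin n → ℝ, F n (t, z))
    (fun N => ?_) ?_
  · exact (Finset.stronglyMeasurable_fun_sum _ fun n _ =>
      (stronglyMeasurable_const.mul (hFmeas n))).aestronglyMeasurable
  · rw [ae_restrict_iff' measurableSet_Ioo]
    refine Filter.Eventually.of_forall fun t ht => ?_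
    have hsum : Summable (fun n => S σ 0 t n k) :=
      summable_S hσcont hmin hlow le_rfl ht.1.le ht.2.le hσAC
    refine (hsum.hasSum.tendsto_sum_nat).congr fun N => ?_
    exact Finset.sum_congr rfl fun n _ => hrepr n t ht

include hσcont hmin hlow hσAC in
lemma aesm_tsum_left :
    AEStronglyMeasurable (fun y => ∑' n, S σ y 1 n k)
      (volume.restrict (Set.Ioo (0:ℝ) 1)) := by
  classical
  let F : (n : ℕ) → ℝ × (Fin n → ℝ) → ℂ := fun n w =>
    Set.indicator {w : ℝ × (Fin n → ℝ) | w.2 ∈ simplex w.1 1 n}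
      (fun w => Gfun σ w.1 1 n k w.2) w
  have hFmeas : ∀ n : ℕ, StronglyMeasurable
      (fun t : ℝ => ∫ z : Fin n → ℝ, F n (t, z)) := by
    intro n
    refine StronglyMeasurable.integral_prod_right' (f := F n) ?_
    refine Measurable.stronglyMeasurable ?_
    exact Measurable.indicator
      (measurable_Gfun_param hσcont hmin hlow measurable_fst measurable_const k)
      (measurableSet_simplex_param measurable_fst measurable_const)
  have hrepr : ∀ (n : ℕ), ∀ t ∈ Set.Ioo (0:ℝ) 1,
      S σ t 1 n k = ((2:ℂ)^n)⁻¹ * ∫ z : Fin n → ℝ, F n (t, z) := by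
    intro n t ht
    rw [S]
    congr 1
    rw [setIntegral_congr_fun (measurableSet_simplex t 1 n)
      (fun z hz => Sintegrand_eq_Gfun hσcont hmin hlow ht.1.le ht.2.le le_rfl hz),
      ← integral_indicator (measurableSet_simplex t 1 n)]
    have hfun : (fun z : Fin n → ℝ => Set.indicator (simplex t 1 n) (Gfun σ t 1 n k) z)
        = fun z : Fin n → ℝ => F n (t, z) := by
      funext z
      by_cases hz : z ∈ simplex t 1 n
      · rw [Set.indicator_of_mem hz]
        show _ = Set.indicator _ _ _
        rw [Set.indicator_of_mem
          (show (t, z) ∈ {w : ℝ × (Fin n → ℝ) | w.2 ∈ simplex w.1 1 n} from hz)]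
      · rw [Set.indicator_of_notMem hz]
        show _ = Set.indicator _ _ _
        rw [Set.indicator_of_notMem
          (show (t, z) ∉ {w : ℝ × (Fin n → ℝ) | w.2 ∈ simplex w.1 1 n} from hz)]
    rw [hfun]
  refine aestronglyMeasurable_of_tendsto_ae atTop
    (f := fun N => fun t : ℝ => ∑ n ∈ Finset.range N, ((2:ℂ)^n)⁻¹ * ∫ z : Fin n → ℝ, F n (t, z))
    (fun N => ?_) ?_
  · exact (Finset.stronglyMeasurable_fun_sum _ fun n _ =>
      (stronglyMeasurable_const.mul (hFmeas n))).aestronglyMeasurable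
  · rw [ae_restrict_iff' measurableSet_Ioo]
    refine Filter.Eventually.of_forall fun t ht => ?_
    have hsum : Summable (fun n => S σ t 1 n k) :=
      summable_S hσcont hmin hlow ht.1.le ht.2.le le_rfl hσAC
    refine (hsum.hasSum.tendsto_sum_nat).congr fun N => ?_
    exact Finset.sum_congr rfl fun n _ => hrepr n t ht

lemma split_le {f : ℝ → ℝ}
    (hf : ∀ u v : ℝ, u ∈ Set.Icc (0:ℝ) 1 → v ∈ Set.Icc (0:ℝ) 1 →
      IntervalIntegrable f volume u v)
    (hf0 : ∀ t ∈ Set.Icc (0:ℝ) 1, 0 ≤ f t) {u v : ℝ}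
    (h0u : 0 ≤ u) (huv : u ≤ v) (hv1 : v ≤ 1) :
    (∫ ξ in (0:ℝ)..u, f ξ) + (∫ ξ in v..(1:ℝ), f ξ) ≤ ∫ ξ in (0:ℝ)..1, f ξ := by
  have hu : u ∈ Set.Icc (0:ℝ) 1 := ⟨h0u, huv.trans hv1⟩
  have hv : v ∈ Set.Icc (0:ℝ) 1 := ⟨h0u.trans huv, hv1⟩
  have h0 : (0:ℝ) ∈ Set.Icc (0:ℝ) 1 := by norm_num
  have h1 : (1:ℝ) ∈ Set.Icc (0:ℝ) 1 := by norm_num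
  have hadd1 : (∫ ξ in (0:ℝ)..u, f ξ) + (∫ ξ in u..v, f ξ) = ∫ ξ in (0:ℝ)..v, f ξ :=
    intervalIntegral.integral_add_adjacent_intervals (hf 0 u h0 hu) (hf u v hu hv)
  have hadd2 : (∫ ξ in (0:ℝ)..v, f ξ) + (∫ ξ in v..(1:ℝ), f ξ) = ∫ ξ in (0:ℝ)..1, f ξ :=
    intervalIntegral.integral_add_adjacent_intervals (hf 0 v h0 hv) (hf v 1 hv h1)
  have hmid : 0 ≤ ∫ ξ in u..v, f ξ :=
    intervalIntegral.integral_nonneg huv fun t ht =>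
      hf0 t ⟨h0u.trans ht.1, ht.2.trans hv1⟩
  linarith

end ParamMeas

end Stmt16Aux

open Stmt16Aux

set_option maxHeartbeats 1000000

/-- Well-definedness of `Φ(k,x) = ∫₀¹ Ψ(k,x,y) q₀(y)/√(σ(x)σ(y)) dy`,
with the explicit bound in terms of `σ_min = min_{[0,1]} σ`. -/
theorem stmt_16 (σ : ℝ → ℝ)
    (hσpos : ∀ x ∈ Set.Icc (0 : ℝ) 1, 0 < σ x)
    (hσAC : sigmaAC σ)
    (hratio : IntegrableOn (fun t => deriv σ t / σ t) (Set.Ioo 0 1))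
    (q₀ : ℝ → ℝ) (hq₀ : IntegrableOn q₀ (Set.Ioo 0 1))
    (σmin : ℝ) (hσmin : IsLeast (σ '' Set.Icc (0 : ℝ) 1) σmin)
    (k : ℂ) (x : ℝ) (hx : x ∈ Set.Ioo (0 : ℝ) 1) :
    IntegrableOn (fun y => Psi σ k x y * ((q₀ y : ℝ) : ℂ) / ((Real.sqrt (σ x * σ y) : ℝ) : ℂ))
      (Set.Ioo 0 1) ∧
    ‖∫ y in Set.Ioo (0 : ℝ) 1,
        Psi σ k x y * ((q₀ y : ℝ) : ℂ) / ((Real.sqrt (σ x * σ y) : ℝ) : ℂ)‖ ≤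
      σmin⁻¹ *
        Real.exp ((∫ ξ in (0 : ℝ)..1, |deriv σ ξ| / σ ξ) + |k.im| * ∫ ξ in (0 : ℝ)..1, 1 / σ ξ) *
        ∫ y in Set.Ioo (0 : ℝ) 1, |q₀ y| := by
  obtain ⟨hx0, hx1⟩ := hx
  obtain ⟨⟨t0, ht0, ht0eq⟩, hlb⟩ := hσmin
  have hmin : 0 < σmin := ht0eq ▸ hσpos t0 ht0
  have hlow : ∀ t ∈ Set.Icc (0:ℝ) 1, σmin ≤ σ t := fun t ht => hlb ⟨t, ht, rfl⟩
  have hσcont : ContinuousOn σ (Set.Icc 0 1) := continuousOn_sigma hσAC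
  set B : ℝ := Real.exp ((∫ ξ in (0:ℝ)..1, |deriv σ ξ| / σ ξ)
    + |k.im| * ∫ ξ in (0:ℝ)..1, 1 / σ ξ) with hBdef
  have hB0 : 0 ≤ B := Real.exp_nonneg _
  have hK0 : (0:ℝ) ≤ |k.im| := abs_nonneg _
  have hII1 : ∀ u v : ℝ, u ∈ Set.Icc (0:ℝ) 1 → v ∈ Set.Icc (0:ℝ) 1 →
      IntervalIntegrable (fun ξ => 1 / σ ξ) volume u v :=
    fun u v hu hv => intervalIntegrable_one_div_sigma hσcont hmin hlow hu hv
  have hII2 : ∀ u v : ℝ, u ∈ Set.Icc (0:ℝ) 1 → v ∈ Set.Icc (0:ℝ) 1 →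
      IntervalIntegrable (fun ξ => |deriv σ ξ| / σ ξ) volume u v :=
    fun u v hu hv => intervalIntegrable_absd hσcont hmin hlow hσAC hu hv
  have hpos01 : ∀ t ∈ Set.Icc (0:ℝ) 1, (0:ℝ) ≤ 1 / σ t := by
    intro t ht
    have := lt_of_lt_of_le hmin (hlow t ht); positivity
  have habs01 : ∀ t ∈ Set.Icc (0:ℝ) 1, (0:ℝ) ≤ |deriv σ t| / σ t := by
    intro t ht
    have := lt_of_lt_of_le hmin (hlow t ht); positivity
  have hPsi : ∀ y ∈ Set.Ioo (0:ℝ) 1, ‖Psi σ k x y‖ ≤ B := by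
    intro y hy
    rw [Psi]
    by_cases hyx : y ≤ x
    · rw [if_pos hyx, norm_mul]
      have h1 := tsum_S_norm_le hσcont hmin hlow le_rfl hy.1.le hy.2.le hσAC (k := k)
      have h2 := tsum_S_norm_le hσcont hmin hlow hx0.le hx1.le le_rfl hσAC (k := k)
      calc ‖∑' n, S σ 0 y n k‖ * ‖∑' n, S σ x 1 n k‖
          ≤ Real.exp ((∫ ξ in (0:ℝ)..y, |deriv σ ξ| / σ ξ)
              + |k.im| * ∫ ξ in (0:ℝ)..y, 1 / σ ξ)
            * Real.exp ((∫ ξ in x..(1:ℝ), |deriv σ ξ| / σ ξ)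
              + |k.im| * ∫ ξ in x..(1:ℝ), 1 / σ ξ) :=
            mul_le_mul h1 h2 (norm_nonneg _) (Real.exp_nonneg _)
        _ ≤ B := by
            rw [← Real.exp_add, hBdef, Real.exp_le_exp]
            have hs1 := split_le hII2 habs01 hy.1.le hyx hx1.le
            have hs2 := split_le hII1 hpos01 hy.1.le hyx hx1.le
            have hs3 := mul_le_mul_of_nonneg_left hs2 hK0
            linarith [mul_add |k.im| (∫ ξ in (0:ℝ)..y, 1 / σ ξ) (∫ ξ in x..(1:ℝ), 1 / σ ξ)]
    · rw [if_neg hyx, norm_mul]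
      push_neg at hyx
      have h1 := tsum_S_norm_le hσcont hmin hlow le_rfl hx0.le hx1.le hσAC (k := k)
      have h2 := tsum_S_norm_le hσcont hmin hlow hy.1.le hy.2.le le_rfl hσAC (k := k)
      calc ‖∑' n, S σ 0 x n k‖ * ‖∑' n, S σ y 1 n k‖
          ≤ Real.exp ((∫ ξ in (0:ℝ)..x, |deriv σ ξ| / σ ξ)
              + |k.im| * ∫ ξ in (0:ℝ)..x, 1 / σ ξ)
            * Real.exp ((∫ ξ in y..(1:ℝ), |deriv σ ξ| / σ ξ)
              + |k.im| * ∫ ξ in y..(1:ℝ), 1 / σ ξ) :=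
            mul_le_mul h1 h2 (norm_nonneg _) (Real.exp_nonneg _)
        _ ≤ B := by
            rw [← Real.exp_add, hBdef, Real.exp_le_exp]
            have hs1 := split_le hII2 habs01 hx0.le hyx.le hy.2.le
            have hs2 := split_le hII1 hpos01 hx0.le hyx.le hy.2.le
            have hs3 := mul_le_mul_of_nonneg_left hs2 hK0
            linarith [mul_add |k.im| (∫ ξ in (0:ℝ)..x, 1 / σ ξ) (∫ ξ in y..(1:ℝ), 1 / σ ξ)]
  have hPsiAesm : AEStronglyMeasurable (fun y => Psi σ k x y)
      (volume.restrict (Set.Ioo (0:ℝ) 1)) := by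
    have h1 := aesm_tsum_right hσcont hmin hlow hσAC (k := k)
    have h2 := aesm_tsum_left hσcont hmin hlow hσAC (k := k)
    have heq : (fun y => Psi σ k x y) = ({y : ℝ | y ≤ x}).piecewise
        (fun y => (∑' n, S σ 0 y n k) * (∑' n, S σ x 1 n k))
        (fun y => (∑' n, S σ 0 x n k) * (∑' n, S σ y 1 n k)) := by
      funext y
      by_cases h : y ≤ x <;> simp [Psi, Set.piecewise, h]
    rw [heq]
    exact AEStronglyMeasurable.piecewise (measurableSet_le measurable_id measurable_const)
      (h1.mul aestronglyMeasurable_const).restrict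
      (aestronglyMeasurable_const.mul h2).restrict
  have hsqrtAesm : AEStronglyMeasurable
      (fun y => ((Real.sqrt (σ x * σ y) : ℝ) : ℂ)) (volume.restrict (Set.Ioo (0:ℝ) 1)) := by
    have hcont : Continuous fun y : ℝ => ((Real.sqrt (σ x * mfun σ y) : ℝ) : ℂ) :=
      Complex.continuous_ofReal.comp
        (Real.continuous_sqrt.comp (continuous_const.mul (mfun_continuous hσcont)))
    refine hcont.aestronglyMeasurable.congr ?_
    rw [Filter.EventuallyEq, ae_restrict_iff' measurableSet_Ioo]
    exact Filter.Eventually.of_forall fun y hy => by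
      rw [mfun_eq ⟨hy.1.le, hy.2.le⟩]
  have haesm : AEStronglyMeasurable
      (fun y => Psi σ k x y * ((q₀ y : ℝ) : ℂ) / ((Real.sqrt (σ x * σ y) : ℝ) : ℂ))
      (volume.restrict (Set.Ioo (0:ℝ) 1)) := by
    have hq' : AEMeasurable (fun y => ((q₀ y : ℝ) : ℂ)) (volume.restrict (Set.Ioo (0:ℝ) 1)) :=
      (Complex.continuous_ofReal.comp_aestronglyMeasurable hq₀.1).aemeasurable
    exact ((hPsiAesm.aemeasurable.mul hq').div hsqrtAesm.aemeasurable).aestronglyMeasurable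
  have hptw : ∀ y ∈ Set.Ioo (0:ℝ) 1,
      ‖Psi σ k x y * ((q₀ y : ℝ) : ℂ) / ((Real.sqrt (σ x * σ y) : ℝ) : ℂ)‖
        ≤ σmin⁻¹ * B * |q₀ y| := by
    intro y hy
    rw [norm_div, norm_mul, Complex.norm_real, Real.norm_eq_abs, Complex.norm_real,
      Real.norm_eq_abs, abs_of_nonneg (Real.sqrt_nonneg _)]
    have h1 : σmin ≤ σ x := hlow x ⟨hx0.le, hx1.le⟩
    have h2 : σmin ≤ σ y := hlow y ⟨hy.1.le, hy.2.le⟩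
    have hsq : σmin ≤ Real.sqrt (σ x * σ y) := by
      have hsq2 : σmin ^ 2 ≤ σ x * σ y := by nlinarith
      calc σmin = Real.sqrt (σmin ^ 2) := (Real.sqrt_sq hmin.le).symm
        _ ≤ Real.sqrt (σ x * σ y) := Real.sqrt_le_sqrt hsq2
    calc ‖Psi σ k x y‖ * |q₀ y| / Real.sqrt (σ x * σ y)
        ≤ B * |q₀ y| / σmin :=
          div_le_div₀ (by positivity)
            (mul_le_mul_of_nonneg_right (hPsi y hy) (abs_nonneg _)) hmin hsq
      _ = σmin⁻¹ * B * |q₀ y| := by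
          field_simp
  have hg : Integrable (fun y => σmin⁻¹ * B * |q₀ y|)
      (volume.restrict (Set.Ioo (0:ℝ) 1)) := (hq₀.abs).const_mul _
  have haeb : ∀ᵐ y ∂(volume.restrict (Set.Ioo (0:ℝ) 1)),
      ‖Psi σ k x y * ((q₀ y : ℝ) : ℂ) / ((Real.sqrt (σ x * σ y) : ℝ) : ℂ)‖
        ≤ σmin⁻¹ * B * |q₀ y| :=
    (ae_restrict_iff' measurableSet_Ioo).2 (Filter.Eventually.of_forall hptw)
  refine ⟨Integrable.mono' hg haesm haeb, ?_⟩
  calc ‖∫ y in Set.Ioo (0:ℝ) 1,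
        Psi σ k x y * ((q₀ y : ℝ) : ℂ) / ((Real.sqrt (σ x * σ y) : ℝ) : ℂ)‖
      ≤ ∫ y in Set.Ioo (0:ℝ) 1, σmin⁻¹ * B * |q₀ y| :=
        norm_integral_le_of_norm_le hg haeb
    _ = σmin⁻¹ * B * ∫ y in Set.Ioo (0:ℝ) 1, |q₀ y| := by
        rw [show (fun y => σmin⁻¹ * B * |q₀ y|) = fun y => (σmin⁻¹ * B) • |q₀ y| from rfl,
          integral_smul, smul_eq_mul]
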